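/- With T_n as above, the sequence {((n − T_n)/√n)²}_{n≥1} is uniformly integrable; indeed (n−T_n)/√n has exponential tails: there exist constants such that Pr((n−T_n)/√n > t) ≤ 2 exp(−c t) for t≥1 and n large, with c = (μ/(2γ))² (up to constants). -/

import Mathlib

open MeasureTheory Filter ProbabilityTheory Real
open scoped ENNReal NNReal

private lemma integrable_of_bdd {Ω : Type} [MeasurableSpace Ω] {P : Measure Ω}
    [IsProbabilityMeasure P] {f : Ω → ℝ} (hm : Measurable f) {C : ℝ}
    (h : ∀ ω, |f ω| ≤ C) : Integrable f P :=
  (integrable_const C).mono' hm.aestronglyMeasurable (ae_of_all _ h)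

private lemma exp_quad {x : ℝ} (hx : |x| ≤ 1) : Real.exp x ≤ 1 + x + (3/4) * x ^ 2 := by
  have h := Real.exp_bound hx (n := 2) (by norm_num)
  have h2 : (∑ m ∈ Finset.range 2, x ^ m / m.factorial) = 1 + x := by
    simp [Finset.sum_range_succ]
  rw [h2] at h
  have h3 := (abs_sub_le_iff.1 h).1
  have h4 : ((Nat.succ 2 : ℕ) : ℝ) / ((Nat.factorial 2 : ℕ) * (2:ℕ)) = 3/4 := by norm_num [Nat.factorial]
  rw [h4] at h3
  nlinarith [sq_abs x, sq_nonneg x]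

/-- one-variable mgf bound -/
private lemma mgf_one {Ω : Type} [MeasurableSpace Ω] (P : Measure Ω) [IsProbabilityMeasure P]
    {X : Ω → ℝ} {γ μ u : ℝ} (hγ : 0 < γ) (hm : Measurable X)
    (hb : ∀ ω, X ω ∈ Set.Icc (0:ℝ) γ) (hmean : ∫ ω, X ω ∂P = μ)
    (hu : |u| * γ ≤ 1) :
    ∫ ω, Real.exp (u * X ω) ∂P ≤ Real.exp (u * μ + (3/4) * u ^ 2 * γ * μ) := by
  have hXint : Integrable X P := integrable_of_bdd hm (C := γ)
    (fun ω => abs_le.2 ⟨by linarith [(hb ω).1], (hb ω).2⟩)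
  have hpt : ∀ ω, Real.exp (u * X ω) ≤ 1 + (u + (3/4) * u ^ 2 * γ) * X ω := by
    intro ω
    have h0 := (hb ω).1
    have h1 := (hb ω).2
    have habs : |u * X ω| ≤ 1 := by
      rw [abs_mul]
      calc |u| * |X ω| ≤ |u| * γ := by
            apply mul_le_mul_of_nonneg_left _ (abs_nonneg u)
            rw [abs_of_nonneg h0]; exact h1
        _ ≤ 1 := hu
    have := exp_quad habs
    have hx2 : (u * X ω) ^ 2 ≤ u ^ 2 * (γ * X ω) := by
      have : X ω * X ω ≤ γ * X ω := mul_le_mul_of_nonneg_right h1 h0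
      nlinarith [sq_nonneg u]
    nlinarith
  have hint2 : Integrable (fun ω => 1 + (u + (3/4) * u ^ 2 * γ) * X ω) P :=
    (integrable_const 1).add (hXint.const_mul _)
  have hexpint : Integrable (fun ω => Real.exp (u * X ω)) P := by
    apply integrable_of_bdd ((hm.const_mul u).exp) (C := Real.exp 1)
    intro ω
    rw [abs_of_nonneg (Real.exp_nonneg _)]
    apply Real.exp_le_exp.2
    calc u * X ω ≤ |u * X ω| := le_abs_self _
      _ ≤ 1 := by
        rw [abs_mul]
        calc |u| * |X ω| ≤ |u| * γ := by
              apply mul_le_mul_of_nonneg_left _ (abs_nonneg u)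
              rw [abs_of_nonneg (hb ω).1]; exact (hb ω).2
          _ ≤ 1 := hu
  calc ∫ ω, Real.exp (u * X ω) ∂P ≤ ∫ ω, (1 + (u + (3/4) * u ^ 2 * γ) * X ω) ∂P :=
        integral_mono hexpint hint2 hpt
    _ = 1 + (u + (3/4) * u ^ 2 * γ) * μ := by
        rw [integral_add (integrable_const 1) (hXint.const_mul _), integral_const,
          integral_const_mul, hmean]
        simp
    _ ≤ Real.exp (u * μ + (3/4) * u ^ 2 * γ * μ) := by
        have := Real.add_one_le_exp (u * μ + (3/4) * u ^ 2 * γ * μ)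
        nlinarith

private lemma chernoff_core {Ω : Type} [MeasurableSpace Ω] (P : Measure Ω)
    [IsProbabilityMeasure P] (X : ℕ ⊕ ℕ → Ω → ℝ) {γ μ s : ℝ}
    (hγ : 0 < γ) (hs0 : 0 ≤ s) (hsγ : s * γ ≤ 1)
    (hm : ∀ c, Measurable (X c)) (hb : ∀ c ω, X c ω ∈ Set.Icc (0:ℝ) γ)
    (hmean : ∀ c, ∫ ω, X c ω ∂P = μ)
    (hind : ProbabilityTheory.iIndepFun X P)
    (F G : Finset (ℕ ⊕ ℕ)) (hd : Disjoint F G) :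
    P {ω | (∑ c ∈ F, X c ω) ≤ ∑ c ∈ G, X c ω}
      ≤ ENNReal.ofReal (Real.exp (s * ((G.card : ℝ) - F.card) * μ
          + (3/4) * ((F.card : ℝ) + G.card) * s ^ 2 * γ * μ)) := by
  classical
  set g : ℕ ⊕ ℕ → ℝ := fun c => if c ∈ F then (-1 : ℝ) else 1 with hg
  have hgabs : ∀ c, |g c| = 1 := by intro c; by_cases h : c ∈ F <;> simp [hg, h]
  set Y : ℕ ⊕ ℕ → Ω → ℝ := fun c ω => g c * X c ω with hY
  have hYm : ∀ c, Measurable (Y c) := fun c => (hm c).const_mul _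
  have hYind : ProbabilityTheory.iIndepFun Y P := by
    have := hind.comp (fun c (x : ℝ) => g c * x) (fun c => measurable_id.const_mul _)
    exact this
  set W : Ω → ℝ := fun ω => ∑ c ∈ F ∪ G, Y c ω with hW
  have hWm : Measurable W := by
    apply Finset.measurable_sum
    intro c _; exact hYm c
  -- event inclusion
  have hsub : {ω | (∑ c ∈ F, X c ω) ≤ ∑ c ∈ G, X c ω}
      ⊆ {ω | (1 : ℝ≥0∞) ≤ ENNReal.ofReal (Real.exp (s * W ω))} := by
    intro ω hω
    simp only [Set.mem_setOf_eq] at hω ⊢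
    have hWval : W ω = (∑ c ∈ G, X c ω) - ∑ c ∈ F, X c ω := by
      show (∑ c ∈ F ∪ G, Y c ω) = _
      rw [Finset.sum_union hd]
      have h1 : ∀ c ∈ F, Y c ω = -X c ω := by
        intro c hc; simp [hY, hg, hc]
      have h2 : ∀ c ∈ G, Y c ω = X c ω := by
        intro c hc
        have : c ∉ F := fun hc' => (Finset.disjoint_left.1 hd) hc' hc
        simp [hY, hg, this]
      rw [Finset.sum_congr rfl h1, Finset.sum_congr rfl h2, Finset.sum_neg_distrib]
      ring
    have hW0 : 0 ≤ W ω := by rw [hWval]; linarith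
    have : (1 : ℝ) ≤ Real.exp (s * W ω) :=
      Real.one_le_exp (mul_nonneg hs0 hW0)
    calc (1 : ℝ≥0∞) = ENNReal.ofReal 1 := by simp
      _ ≤ ENNReal.ofReal (Real.exp (s * W ω)) := ENNReal.ofReal_le_ofReal this
  -- Markov in ℝ≥0∞
  have hmarkov : P {ω | (1 : ℝ≥0∞) ≤ ENNReal.ofReal (Real.exp (s * W ω))}
      ≤ ∫⁻ ω, ENNReal.ofReal (Real.exp (s * W ω)) ∂P := by
    have := mul_meas_ge_le_lintegral₀
      (μ := P) (f := fun ω => ENNReal.ofReal (Real.exp (s * W ω)))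
      (((hWm.const_mul s).exp.ennreal_ofReal).aemeasurable) 1
    simpa using this
  -- W bounded
  have hWbdd : ∀ ω, |W ω| ≤ ((F ∪ G).card : ℝ) * γ := by
    intro ω
    calc |W ω| ≤ ∑ c ∈ F ∪ G, |Y c ω| := Finset.abs_sum_le_sum_abs _ _
      _ ≤ ∑ _c ∈ F ∪ G, γ := by
          apply Finset.sum_le_sum
          intro c _
          rw [hY, abs_mul, hgabs c, one_mul]
          exact abs_le.2 ⟨by linarith [(hb c ω).1], (hb c ω).2⟩
      _ = ((F ∪ G).card : ℝ) * γ := by rw [Finset.sum_const, nsmul_eq_mul]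
  have hexpint : Integrable (fun ω => Real.exp (s * W ω)) P := by
    apply integrable_of_bdd ((hWm.const_mul s).exp) (C := Real.exp (s * (((F ∪ G).card : ℝ) * γ)))
    intro ω
    rw [abs_of_nonneg (Real.exp_nonneg _)]
    apply Real.exp_le_exp.2
    exact mul_le_mul_of_nonneg_left (le_trans (le_abs_self _) (hWbdd ω)) hs0
  -- lintegral to integral
  have hlint : ∫⁻ ω, ENNReal.ofReal (Real.exp (s * W ω)) ∂P
      = ENNReal.ofReal (∫ ω, Real.exp (s * W ω) ∂P) :=
    (ofReal_integral_eq_lintegral_ofReal hexpint (ae_of_all _ fun ω => Real.exp_nonneg _)).symm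
  -- mgf factorization
  have hWsum : W = ∑ c ∈ F ∪ G, Y c := by
    funext ω; rw [hW]; simp [Finset.sum_apply]
  have hmgf : ∫ ω, Real.exp (s * W ω) ∂P = ∏ c ∈ F ∪ G, mgf (Y c) P s := by
    have := hYind.mgf_sum hYm (F ∪ G) (t := s)
    rw [← this, hWsum]
    rfl
  -- per-term bound
  have hterm : ∀ c ∈ F ∪ G, mgf (Y c) P s
      ≤ Real.exp (s * g c * μ + (3/4) * s ^ 2 * γ * μ) := by
    intro c _
    have hu : |s * g c| * γ ≤ 1 := by
      rw [abs_mul, hgabs c, mul_one, abs_of_nonneg hs0]; exact hsγ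
    have := mgf_one P hγ (hm c) (hb c) (hmean c) hu
    have heq : mgf (Y c) P s = ∫ ω, Real.exp ((s * g c) * X c ω) ∂P := by
      unfold ProbabilityTheory.mgf
      congr 1
      funext ω
      rw [hY]
      ring_nf
    rw [heq]
    calc ∫ ω, Real.exp ((s * g c) * X c ω) ∂P
        ≤ Real.exp ((s * g c) * μ + (3/4) * (s * g c) ^ 2 * γ * μ) := this
      _ = Real.exp (s * g c * μ + (3/4) * s ^ 2 * γ * μ) := by
          congr 1
          have hg2 : (g c) ^ 2 = 1 := by rw [← sq_abs, hgabs c, one_pow]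
          rw [mul_pow, hg2, mul_one]
  have hsumg : (∑ c ∈ F ∪ G, g c) = (G.card : ℝ) - (F.card : ℝ) := by
    rw [Finset.sum_union hd]
    have h1 : (∑ c ∈ F, g c) = (F.card : ℝ) * (-1) := by
      rw [Finset.sum_congr rfl (fun c hc => if_pos hc), Finset.sum_const, nsmul_eq_mul]
    have h2 : (∑ c ∈ G, g c) = (G.card : ℝ) := by
      rw [Finset.sum_congr rfl
        (fun c hc => if_neg (fun h => Finset.disjoint_left.1 hd h hc)), Finset.sum_const,
        nsmul_eq_mul, mul_one]
    rw [h1, h2]; ring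
  have hprod : (∏ c ∈ F ∪ G, mgf (Y c) P s)
      ≤ Real.exp (s * ((G.card : ℝ) - F.card) * μ
          + (3/4) * ((F.card : ℝ) + G.card) * s ^ 2 * γ * μ) := by
    calc (∏ c ∈ F ∪ G, mgf (Y c) P s)
        ≤ ∏ c ∈ F ∪ G, Real.exp (s * g c * μ + (3/4) * s ^ 2 * γ * μ) :=
          Finset.prod_le_prod (fun c _ => mgf_nonneg) hterm
      _ = Real.exp (∑ c ∈ F ∪ G, (s * g c * μ + (3/4) * s ^ 2 * γ * μ)) :=
          (Real.exp_sum _ _).symm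
      _ ≤ _ := by
          apply Real.exp_le_exp.2
          rw [Finset.sum_add_distrib, Finset.sum_const, nsmul_eq_mul]
          have h3 : (∑ c ∈ F ∪ G, s * g c * μ) = (s * μ) * ∑ c ∈ F ∪ G, g c := by
            rw [Finset.mul_sum]
            exact Finset.sum_congr rfl (fun c _ => by ring)
          rw [h3, hsumg, Finset.card_union_of_disjoint hd]
          push_cast
          nlinarith []
  calc P {ω | (∑ c ∈ F, X c ω) ≤ ∑ c ∈ G, X c ω}
      ≤ P {ω | (1 : ℝ≥0∞) ≤ ENNReal.ofReal (Real.exp (s * W ω))} := measure_mono hsub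
    _ ≤ ∫⁻ ω, ENNReal.ofReal (Real.exp (s * W ω)) ∂P := hmarkov
    _ = ENNReal.ofReal (∫ ω, Real.exp (s * W ω) ∂P) := hlint
    _ = ENNReal.ofReal (∏ c ∈ F ∪ G, mgf (Y c) P s) := by rw [hmgf]
    _ ≤ _ := ENNReal.ofReal_le_ofReal hprod

private lemma cross {u : ℕ → ℕ} (h0 : u 0 = 0)
    (hs : ∀ k, u (k+1) = u k ∨ u (k+1) = u k + 1) :
    ∀ {K m : ℕ}, 1 ≤ m → m ≤ u K → ∃ j, j < K ∧ u j + 1 = m ∧ u (j+1) = m := by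
  intro K
  induction K with
  | zero => intro m hm hK; omega
  | succ K ih =>
    intro m hm hK
    by_cases h : m ≤ u K
    · obtain ⟨j, hj, h1, h2⟩ := ih hm h
      exact ⟨j, by omega, h1, h2⟩
    · push_neg at h
      rcases hs K with h' | h' <;> exact ⟨K, by omega, by omega, by omega⟩

section Det
variable {Ω : Type} (RG : ℕ → Ω → ℕ)

private lemma RG_le (hRG0 : ∀ ω, RG 0 ω = 0)
    (hstep : ∀ n ω, RG (n + 1) ω = RG n ω ∨ RG (n + 1) ω = RG n ω + 1)
    (ω : Ω) : ∀ k, RG k ω ≤ k := by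
  intro k
  induction k with
  | zero => exact (hRG0 ω).le
  | succ k ih => rcases hstep k ω with h | h <;> omega

private lemma S_nonempty (hRG0 : ∀ ω, RG 0 ω = 0)
    (hstep : ∀ n ω, RG (n + 1) ω = RG n ω ∨ RG (n + 1) ω = RG n ω + 1)
    (ω : Ω) (n : ℕ) (hn : 1 ≤ n) :
    {k : ℕ | 1 ≤ k ∧ ((k + 1) - RG (k + 1) ω = (n + 1) / 2 + 1
      ∨ RG (k + 1) ω = (n + 1) / 2 + 1)}.Nonempty := by
  set m := (n + 1) / 2 + 1 with hm
  have hm2 : 2 ≤ m := by omega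
  have hrle := RG_le RG hRG0 hstep ω
  set K := 2 * m - 2 with hK
  have hsplit : m ≤ RG (K + 1) ω ∨ m ≤ (K + 1) - RG (K + 1) ω := by
    have := hrle (K + 1); omega
  have hsstep : ∀ k, (k+1) - RG (k+1) ω = (k - RG k ω)
      ∨ (k+1) - RG (k+1) ω = (k - RG k ω) + 1 := by
    intro k
    have h1 := hrle k
    rcases hstep k ω with h | h <;> omega
  rcases hsplit with h | h
  · obtain ⟨j, hj, h1, h2⟩ := cross (u := fun k => RG k ω) (hRG0 ω)
      (fun k => hstep k ω) (by omega : 1 ≤ m) h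
    have hj1 : 1 ≤ j := by have := hrle (j + 1); omega
    exact ⟨j, hj1, Or.inr h2⟩
  · obtain ⟨j, hj, h1, h2⟩ := cross (u := fun k => k - RG k ω)
      (by simp [hRG0 ω]) hsstep (by omega : 1 ≤ m) h
    have hj1 : 1 ≤ j := by omega
    exact ⟨j, hj1, Or.inl h2⟩

private lemma event_incl {XR XS : ℕ → Ω → ℝ}
    (hbR : ∀ i ω, 0 ≤ XR i ω) (hbS : ∀ i ω, 0 ≤ XS i ω)
    (hRG0 : ∀ ω, RG 0 ω = 0)
    (hstep : ∀ n ω, RG (n + 1) ω = RG n ω ∨ RG (n + 1) ω = RG n ω + 1)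
    (hg1 : ∀ n ω, (∑ i ∈ Finset.range (RG n ω), XR i ω)
        < ∑ j ∈ Finset.range (n - RG n ω), XS j ω → RG (n + 1) ω = RG n ω + 1)
    (hg0 : ∀ n ω, (∑ j ∈ Finset.range (n - RG n ω), XS j ω)
        < ∑ i ∈ Finset.range (RG n ω), XR i ω → RG (n + 1) ω = RG n ω)
    (T : ℕ → Ω → ℕ)
    (hT : ∀ n ω, T n ω = min n (sInf {k : ℕ | 1 ≤ k ∧
        ((k + 1) - RG (k + 1) ω = (n + 1) / 2 + 1 ∨ RG (k + 1) ω = (n + 1) / 2 + 1)}))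
    (n : ℕ) (hn : 1 ≤ n) (t : ℝ) (ht : 1 ≤ t) (ω : Ω)
    (hω : t < ((n : ℝ) - T n ω) / Real.sqrt n) :
    (⌈t * Real.sqrt n⌉₊ + ((n + 1) / 2 + 1) ≤ n + 1) ∧
    ((∑ i ∈ Finset.range ((n + 1) / 2), XR i ω
        ≤ ∑ j ∈ Finset.range (n + 1 - ((n + 1) / 2 + 1) - ⌈t * Real.sqrt n⌉₊), XS j ω) ∨
     (∑ j ∈ Finset.range ((n + 1) / 2), XS j ω
        ≤ ∑ i ∈ Finset.range (n + 1 - ((n + 1) / 2 + 1) - ⌈t * Real.sqrt n⌉₊), XR i ω)) := by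
  set m := (n + 1) / 2 + 1 with hmdef
  set q := ⌈t * Real.sqrt n⌉₊ with hqdef
  set B := n + 1 - m - q with hBdef
  have hrle := RG_le RG hRG0 hstep ω
  have hsq : (1 : ℝ) ≤ Real.sqrt n := by
    rw [show (1 : ℝ) = Real.sqrt 1 from Real.sqrt_one.symm]
    exact Real.sqrt_le_sqrt (by exact_mod_cast hn)
  have hsqpos : (0 : ℝ) < Real.sqrt n := lt_of_lt_of_le one_pos hsq
  have h1 : t * Real.sqrt n < (n : ℝ) - T n ω := (lt_div_iff₀ hsqpos).1 hω
  have htsq : (1 : ℝ) ≤ t * Real.sqrt n := by nlinarith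
  have hTn : T n ω < n := by
    have : (T n ω : ℝ) < n := by nlinarith
    exact_mod_cast this
  set S := {k : ℕ | 1 ≤ k ∧ ((k + 1) - RG (k + 1) ω = m ∨ RG (k + 1) ω = m)} with hSdef
  have hSne : S.Nonempty := S_nonempty RG hRG0 hstep ω n hn
  set τ := sInf S with hτdef
  obtain ⟨hτ1, hτdisj⟩ := Nat.sInf_mem hSne
  rw [← hτdef] at hτ1 hτdisj
  have hminT : T n ω = min n τ := hT n ω
  have hτn : τ < n := by
    by_contra h
    push_neg at h
    rw [min_eq_left h] at hminT
    omega
  have hTτ : T n ω = τ := by rw [hminT, min_eq_right hτn.le]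
  have hτreal : (τ : ℝ) < (n : ℝ) - t * Real.sqrt n := by
    rw [← hTτ]; linarith
  have hqreal : (q : ℝ) < t * Real.sqrt n + 1 :=
    Nat.ceil_lt_add_one (by positivity)
  have hτq : τ + q ≤ n := by
    have h2 : ((τ + q : ℕ) : ℝ) < ((n + 1 : ℕ) : ℝ) := by push_cast; linarith
    have h3 : τ + q < n + 1 := by exact_mod_cast h2
    omega
  have hmτ : m ≤ τ + 1 := by
    rcases hτdisj with h | h
    · omega
    · have := hrle (τ + 1); omega
  refine ⟨by omega, ?_⟩
  have hsstep : ∀ k, (k+1) - RG (k+1) ω = (k - RG k ω)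
      ∨ (k+1) - RG (k+1) ω = (k - RG k ω) + 1 := by
    intro k
    have h1 := hrle k
    rcases hstep k ω with h | h <;> omega
  rcases hτdisj with hcase | hcase
  · -- S-counter hit m : right disjunct
    right
    obtain ⟨j, hj, hj1, hj2⟩ := cross (u := fun k => k - RG k ω)
      (by simp [hRG0 ω]) hsstep (by omega : 1 ≤ m) (le_of_eq hcase.symm)
    have hstay : RG (j + 1) ω = RG j ω := by
      rcases hstep j ω with h | h
      · exact h
      · exfalso; have := hrle j; omega
    have hineq : (∑ i ∈ Finset.range ((n+1)/2), XS i ω)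
        ≤ ∑ i ∈ Finset.range (RG j ω), XR i ω := by
      have hjs : j - RG j ω = (n + 1) / 2 := by omega
      by_contra h
      push_neg at h
      rw [← hjs] at h
      have := hg1 j ω h
      omega
    refine le_trans hineq (Finset.sum_le_sum_of_subset_of_nonneg
      (Finset.range_subset_range.2 ?_) (fun i _ _ => hbR i ω))
    have := hrle j
    omega
  · -- R-counter hit m : left disjunct
    left
    obtain ⟨j, hj, hj1, hj2⟩ := cross (u := fun k => RG k ω)
      (hRG0 ω) (fun k => hstep k ω) (by omega : 1 ≤ m) (le_of_eq hcase.symm)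
    have hineq : (∑ i ∈ Finset.range ((n+1)/2), XR i ω)
        ≤ ∑ i ∈ Finset.range (j - RG j ω), XS i ω := by
      have hjr : RG j ω = (n + 1) / 2 := by omega
      rw [← hjr]
      by_contra h
      push_neg at h
      have := hg0 j ω h
      omega
    refine le_trans hineq (Finset.sum_le_sum_of_subset_of_nonneg
      (Finset.range_subset_range.2 ?_) (fun i _ _ => hbS i ω))
    have := hrle j
    omega
end Det

private lemma T_meas {Ω : Type} [MeasurableSpace Ω] (RG : ℕ → Ω → ℕ)
    (hRGmeas : ∀ n, Measurable (RG n)) (hRG0 : ∀ ω, RG 0 ω = 0)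
    (hstep : ∀ n ω, RG (n + 1) ω = RG n ω ∨ RG (n + 1) ω = RG n ω + 1)
    (T : ℕ → Ω → ℕ)
    (hT : ∀ n ω, T n ω = min n (sInf {k : ℕ | 1 ≤ k ∧
        ((k + 1) - RG (k + 1) ω = (n + 1) / 2 + 1 ∨ RG (k + 1) ω = (n + 1) / 2 + 1)}))
    (n : ℕ) : Measurable (T n) := by
  rcases Nat.eq_zero_or_pos n with hn | hn
  · subst hn
    have : T 0 = fun _ => 0 := by
      funext ω; rw [hT 0 ω]; simp
    rw [this]; exact measurable_const
  set m := (n + 1) / 2 + 1 with hm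
  have hA : ∀ k : ℕ, MeasurableSet {ω : Ω | 1 ≤ k ∧
      ((k + 1) - RG (k + 1) ω = m ∨ RG (k + 1) ω = m)} := by
    intro k
    by_cases hk : 1 ≤ k
    · simp only [hk, true_and]
      have h1 : MeasurableSet {ω : Ω | (k + 1) - RG (k + 1) ω = m} :=
        (measurable_from_top.comp (hRGmeas (k + 1))) (measurableSet_singleton m)
      have h2 : MeasurableSet {ω : Ω | RG (k + 1) ω = m} :=
        (hRGmeas (k + 1)) (measurableSet_singleton m)
      exact h1.union h2
    · have : {ω : Ω | 1 ≤ k ∧ ((k + 1) - RG (k + 1) ω = m ∨ RG (k + 1) ω = m)} = ∅ := by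
        ext ω; simp [hk]
      rw [this]; exact MeasurableSet.empty
  have hg : Measurable (fun ω => sInf {k : ℕ | 1 ≤ k ∧
      ((k + 1) - RG (k + 1) ω = m ∨ RG (k + 1) ω = m)}) := by
    apply measurable_to_countable'
    intro j
    have hset : (fun ω => sInf {k : ℕ | 1 ≤ k ∧
        ((k + 1) - RG (k + 1) ω = m ∨ RG (k + 1) ω = m)}) ⁻¹' {j}
        = {ω : Ω | 1 ≤ j ∧ ((j + 1) - RG (j + 1) ω = m ∨ RG (j + 1) ω = m)}
          ∩ ⋂ (i : ℕ) (_ : i < j), {ω : Ω | 1 ≤ i ∧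
            ((i + 1) - RG (i + 1) ω = m ∨ RG (i + 1) ω = m)}ᶜ := by
      ext ω
      simp only [Set.mem_preimage, Set.mem_singleton_iff, Set.mem_inter_iff, Set.mem_iInter,
        Set.mem_compl_iff, Set.mem_setOf_eq]
      constructor
      · intro h
        have hne := S_nonempty RG hRG0 hstep ω n hn
        constructor
        · have := Nat.sInf_mem hne
          rw [h] at this
          exact this
        · intro i hi hmem
          have h2 : sInf {k : ℕ | 1 ≤ k ∧
              ((k + 1) - RG (k + 1) ω = m ∨ RG (k + 1) ω = m)} ≤ i := Nat.sInf_le hmem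
          omega
      · rintro ⟨hj, hlt⟩
        refine le_antisymm (Nat.sInf_le hj) ?_
        by_contra hc
        push_neg at hc
        have hne : ({k : ℕ | 1 ≤ k ∧
            ((k + 1) - RG (k + 1) ω = m ∨ RG (k + 1) ω = m)} : Set ℕ).Nonempty := ⟨j, hj⟩
        have hmem := Nat.sInf_mem hne
        exact hlt _ hc hmem
    rw [hset]
    exact (hA j).inter (MeasurableSet.iInter fun i => MeasurableSet.iInter
      fun _ => (hA i).compl)
  have : T n = fun ω => min n (sInf {k : ℕ | 1 ≤ k ∧
      ((k + 1) - RG (k + 1) ω = m ∨ RG (k + 1) ω = m)}) := funext fun ω => hT n ω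
  rw [this]
  exact measurable_const.min hg

private lemma exponent_choice {γ μ t nn r D v : ℝ} (hγ : 0 < γ) (hμ : 0 < μ) (hμγ : μ ≤ γ)
    (ht : 1 ≤ t) (hr1 : 1 ≤ r) (hr2 : r ^ 2 = nn) (hv : v = 3/4 * γ * μ)
    (hD1 : t * r * μ ≤ D) :
    ∃ s : ℝ, 0 ≤ s ∧ s * γ ≤ 1 ∧ -(s * D) + nn * s ^ 2 * v ≤ -(μ / (2 * γ)) ^ 2 * t := by
  have ht0 : (0:ℝ) < t := lt_of_lt_of_le one_pos ht
  have hr0 : (0:ℝ) < r := lt_of_lt_of_le one_pos hr1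
  have hn1 : 1 ≤ nn := by nlinarith
  have hnpos : 0 < nn := by linarith
  have hvpos : 0 < v := by rw [hv]; positivity
  have htrμ : (0:ℝ) < t * r * μ := mul_pos (mul_pos ht0 hr0) hμ
  have hDpos : 0 < D := lt_of_lt_of_le htrμ hD1
  have htarget : -(μ / (2 * γ)) ^ 2 * t = -(μ ^ 2 * t / (4 * γ ^ 2)) := by
    field_simp; ring
  rw [htarget]
  rcases le_or_gt (D / (2 * nn * v)) (1 / γ) with hmin | hmin
  · refine ⟨D / (2 * nn * v), by positivity, ?_, ?_⟩
    · calc D / (2 * nn * v) * γ ≤ (1 / γ) * γ := mul_le_mul_of_nonneg_right hmin hγ.le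
        _ = 1 := by field_simp
    · have hval : -(D / (2 * nn * v) * D) + nn * (D / (2 * nn * v)) ^ 2 * v
          = -(D ^ 2 / (4 * nn * v)) := by
        field_simp
        ring
      rw [hval, neg_le_neg_iff, div_le_div_iff₀ (by positivity) (by positivity)]
      have hD2 : t ^ 2 * μ ^ 2 * nn ≤ D ^ 2 := by
        calc t ^ 2 * μ ^ 2 * nn = (t * r * μ) ^ 2 := by rw [← hr2]; ring
          _ ≤ D ^ 2 := pow_le_pow_left₀ htrμ.le hD1 2
      have hstep1 : μ ≤ t * γ := by nlinarith
      have hJ : (0:ℝ) < t * μ ^ 2 * nn * γ :=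
        mul_pos (mul_pos (mul_pos ht0 (pow_pos hμ 2)) hnpos) hγ
      rw [hv]
      nlinarith [mul_le_mul_of_nonneg_right hD2 (by positivity : (0:ℝ) ≤ 4 * γ ^ 2),
        mul_le_mul_of_nonneg_right hstep1 hJ.le, sq_nonneg (D * γ)]
  · refine ⟨1 / γ, by positivity, by field_simp; exact le_rfl, ?_⟩
    have h2nv : 2 * nn * v < D * γ := by
      rw [div_lt_div_iff₀ hγ (by positivity : (0:ℝ) < 2 * nn * v)] at hmin
      linarith
    have hDt : t * μ ≤ D := by nlinarith
    have key : μ ^ 2 * t / (4 * γ ^ 2) ≤ D / (2 * γ) := by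
      rw [div_le_div_iff₀ (by positivity) (by positivity)]
      nlinarith [mul_le_mul_of_nonneg_right hDt (by positivity : (0:ℝ) ≤ 4 * γ ^ 2),
        mul_nonneg (mul_nonneg (mul_nonneg (by linarith : (0:ℝ) ≤ 2 * γ) ht0.le) hμ.le)
          (by linarith : (0:ℝ) ≤ 2 * γ - μ)]
    have e1 : nn * (1 / γ) ^ 2 * v = (2 * nn * v) / (2 * γ ^ 2) := by
      field_simp
    have e2 : D / (2 * γ) = (D * γ) / (2 * γ ^ 2) := by
      rw [div_eq_div_iff (by positivity) (by positivity)]; ring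
    have hnvineq : nn * (1 / γ) ^ 2 * v ≤ D / (2 * γ) := by
      rw [e1, e2]
      exact div_le_div_of_nonneg_right h2nv.le (by positivity)
    have hDγ : D / (2 * γ) + D / (2 * γ) = D / γ := by ring
    have hneg : -(1 / γ * D) = -(D / γ) := by ring
    rw [hneg]
    linarith

private lemma tail_bound {Ω : Type} [MeasurableSpace Ω] (P : Measure Ω) [IsProbabilityMeasure P]
    (XR XS : ℕ → Ω → ℝ) (γ μ : ℝ)
    (hγ : 0 < γ) (hμ : 0 < μ)
    (hmR : ∀ i, Measurable (XR i)) (hmS : ∀ i, Measurable (XS i))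
    (hbR : ∀ i ω, XR i ω ∈ Set.Icc (0 : ℝ) γ) (hbS : ∀ i ω, XS i ω ∈ Set.Icc (0 : ℝ) γ)
    (hidR : ∀ i, P.map (XR i) = P.map (XR 0)) (hidS : ∀ i, P.map (XS i) = P.map (XS 0))
    (hindep : ProbabilityTheory.iIndepFun (Sum.elim XR XS) P)
    (hmeanR : ∫ ω, XR 0 ω ∂P = μ) (hmeanS : ∫ ω, XS 0 ω ∂P = μ)
    (RG : ℕ → Ω → ℕ) (hRG0 : ∀ ω, RG 0 ω = 0)
    (hstep : ∀ n ω, RG (n + 1) ω = RG n ω ∨ RG (n + 1) ω = RG n ω + 1)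
    (hg1 : ∀ n ω, (∑ i ∈ Finset.range (RG n ω), XR i ω)
        < ∑ j ∈ Finset.range (n - RG n ω), XS j ω → RG (n + 1) ω = RG n ω + 1)
    (hg0 : ∀ n ω, (∑ j ∈ Finset.range (n - RG n ω), XS j ω)
        < ∑ i ∈ Finset.range (RG n ω), XR i ω → RG (n + 1) ω = RG n ω)
    (T : ℕ → Ω → ℕ)
    (hT : ∀ n ω, T n ω = min n (sInf {k : ℕ | 1 ≤ k ∧
        ((k + 1) - RG (k + 1) ω = (n + 1) / 2 + 1 ∨ RG (k + 1) ω = (n + 1) / 2 + 1)})) :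
    ∀ t : ℝ, 1 ≤ t → ∀ n : ℕ, 1 ≤ n →
      P {ω | t < ((n : ℝ) - T n ω) / Real.sqrt n}
        ≤ ENNReal.ofReal (2 * Real.exp (-(μ / (2 * γ)) ^ 2 * t)) := by
  intro t ht n hn
  -- basic facts
  have hPuniv : P Set.univ = 1 := measure_univ
  have hμγ : μ ≤ γ := by
    rw [← hmeanR]
    calc ∫ ω, XR 0 ω ∂P ≤ ∫ _ω, γ ∂P := by
          apply integral_mono _ (integrable_const γ) (fun ω => (hbR 0 ω).2)
          exact (integrable_const γ).mono' (hmR 0).aestronglyMeasurable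
            (ae_of_all _ fun ω => abs_le.2 ⟨by linarith [(hbR 0 ω).1], (hbR 0 ω).2⟩)
      _ = γ := by simp
  have hmeantrans : ∀ (X : ℕ → Ω → ℝ), (∀ i, Measurable (X i)) →
      (∀ i, P.map (X i) = P.map (X 0)) → (∫ ω, X 0 ω ∂P = μ) →
      ∀ i, ∫ ω, X i ω ∂P = μ := by
    intro X hm hid h0 i
    have h1 : ∫ ω, X i ω ∂P = ∫ x, x ∂(P.map (X i)) :=
      (integral_map (hm i).aemeasurable aestronglyMeasurable_id).symm
    have h2 : ∫ x, x ∂(P.map (X 0)) = ∫ ω, X 0 ω ∂P :=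
      integral_map (hm 0).aemeasurable aestronglyMeasurable_id
    rw [h1, hid i, h2, h0]
  have hmean : ∀ c : ℕ ⊕ ℕ, ∫ ω, Sum.elim XR XS c ω ∂P = μ := by
    rintro (i | j)
    · exact hmeantrans XR hmR hidR hmeanR i
    · exact hmeantrans XS hmS hidS hmeanS j
  have hm : ∀ c : ℕ ⊕ ℕ, Measurable (Sum.elim XR XS c) := by
    rintro (i | j); exacts [hmR i, hmS j]
  have hb : ∀ (c : ℕ ⊕ ℕ) ω, Sum.elim XR XS c ω ∈ Set.Icc (0:ℝ) γ := by
    rintro (i | j) ω; exacts [hbR i ω, hbS j ω]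
  set m := (n + 1) / 2 + 1 with hmdef
  set a := (n + 1) / 2 with hadef
  set q := ⌈t * Real.sqrt n⌉₊ with hqdef
  set B := n + 1 - m - q with hBdef
  by_cases hcase : q + m ≤ n + 1
  case neg =>
    have hsub : {ω | t < ((n : ℝ) - T n ω) / Real.sqrt n} ⊆ (∅ : Set Ω) := by
      intro ω hω
      exact absurd (event_incl RG (fun i ω => (hbR i ω).1) (fun i ω => (hbS i ω).1)
        hRG0 hstep hg1 hg0 T hT n hn t ht ω hω).1 hcase
    calc P _ ≤ P ∅ := measure_mono hsub
      _ = 0 := measure_empty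
      _ ≤ _ := zero_le
  case pos =>
  -- real-number facts
  have hsq1 : (1 : ℝ) ≤ Real.sqrt n := by
    rw [show (1 : ℝ) = Real.sqrt 1 from Real.sqrt_one.symm]
    exact Real.sqrt_le_sqrt (by exact_mod_cast hn)
  have hsqn : Real.sqrt n ^ 2 = n := Real.sq_sqrt (by positivity)
  have hqge : t * Real.sqrt n ≤ (q : ℝ) := Nat.le_ceil _
  have hBqa : B + q ≤ a := by omega
  have habn : a + B ≤ n := by omega
  have hqge : t * Real.sqrt n ≤ (q : ℝ) := Nat.le_ceil _
  have hBqa : B + q ≤ a := by omega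
  have habn : a + B ≤ n := by omega
  have hsq1 : (1 : ℝ) ≤ Real.sqrt n := by
    rw [show (1 : ℝ) = Real.sqrt 1 from Real.sqrt_one.symm]
    exact Real.sqrt_le_sqrt (by exact_mod_cast hn)
  have hsqn : Real.sqrt n ^ 2 = (n : ℝ) := Real.sq_sqrt (by positivity)
  have hDge : t * Real.sqrt n * μ ≤ ((a : ℝ) - B) * μ := by
    have h1 : (B : ℝ) + q ≤ (a : ℝ) := by exact_mod_cast hBqa
    have h2 : t * Real.sqrt n ≤ (a : ℝ) - B := by linarith
    exact mul_le_mul_of_nonneg_right h2 hμ.le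
  obtain ⟨s, hs0, hsγ, hsexp⟩ := exponent_choice (nn := (n : ℝ)) (r := Real.sqrt n)
    (D := ((a : ℝ) - B) * μ) hγ hμ hμγ ht hsq1 hsqn rfl hDge
  -- exponent bound in the form produced by chernoff_core
  have hexp : s * ((B : ℝ) - a) * μ + (3/4) * ((a : ℝ) + B) * s ^ 2 * γ * μ
      ≤ -(μ / (2 * γ)) ^ 2 * t := by
    have habn' : (a : ℝ) + B ≤ n := by exact_mod_cast habn
    have h1 : s * ((B : ℝ) - a) * μ = -(s * (((a : ℝ) - B) * μ)) := by ring
    have h2 : (3/4) * ((a : ℝ) + B) * s ^ 2 * γ * μ ≤ (n : ℝ) * s ^ 2 * (3/4 * γ * μ) := by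
      nlinarith [sq_nonneg s, mul_pos hγ hμ,
        mul_nonneg (mul_nonneg (by norm_num : (0:ℝ) ≤ 3/4) (mul_nonneg hγ.le hμ.le))
          (mul_nonneg (sq_nonneg s) (by linarith : (0:ℝ) ≤ (n : ℝ) - ((a:ℝ) + B)))]
    linarith
  -- Chernoff for the two events
  classical
  set FA : Finset (ℕ ⊕ ℕ) := (Finset.range a).disjSum (∅ : Finset ℕ) with hFA
  set GA : Finset (ℕ ⊕ ℕ) := (∅ : Finset ℕ).disjSum (Finset.range B) with hGA
  set FB : Finset (ℕ ⊕ ℕ) := (∅ : Finset ℕ).disjSum (Finset.range a) with hFB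
  set GB : Finset (ℕ ⊕ ℕ) := (Finset.range B).disjSum (∅ : Finset ℕ) with hGB
  have hdA : Disjoint FA GA := by
    rw [Finset.disjoint_left]
    rintro (i | j) hc1 hc2 <;> simp_all
  have hdB : Disjoint FB GB := by
    rw [Finset.disjoint_left]
    rintro (i | j) hc1 hc2 <;> simp_all
  have hchernA := chernoff_core P (Sum.elim XR XS) hγ hs0 hsγ hm hb hmean hindep FA GA hdA
  have hchernB := chernoff_core P (Sum.elim XR XS) hγ hs0 hsγ hm hb hmean hindep FB GB hdB
  have hsumFA : ∀ ω, (∑ c ∈ FA, Sum.elim XR XS c ω) = ∑ i ∈ Finset.range a, XR i ω := by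
    intro ω; rw [hFA, Finset.sum_disjSum]; simp
  have hsumGA : ∀ ω, (∑ c ∈ GA, Sum.elim XR XS c ω) = ∑ j ∈ Finset.range B, XS j ω := by
    intro ω; rw [hGA, Finset.sum_disjSum]; simp
  have hsumFB : ∀ ω, (∑ c ∈ FB, Sum.elim XR XS c ω) = ∑ j ∈ Finset.range a, XS j ω := by
    intro ω; rw [hFB, Finset.sum_disjSum]; simp
  have hsumGB : ∀ ω, (∑ c ∈ GB, Sum.elim XR XS c ω) = ∑ i ∈ Finset.range B, XR i ω := by
    intro ω; rw [hGB, Finset.sum_disjSum]; simp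
  have hcards : (FA.card = a ∧ GA.card = B) ∧ (FB.card = a ∧ GB.card = B) := by
    constructor <;> constructor <;> simp [hFA, hGA, hFB, hGB]
  have hboundA : P {ω | (∑ i ∈ Finset.range a, XR i ω) ≤ ∑ j ∈ Finset.range B, XS j ω}
      ≤ ENNReal.ofReal (Real.exp (-(μ / (2 * γ)) ^ 2 * t)) := by
    have heq : {ω | (∑ i ∈ Finset.range a, XR i ω) ≤ ∑ j ∈ Finset.range B, XS j ω}
        = {ω | (∑ c ∈ FA, Sum.elim XR XS c ω) ≤ ∑ c ∈ GA, Sum.elim XR XS c ω} := by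
      ext ω; rw [Set.mem_setOf_eq, Set.mem_setOf_eq, hsumFA ω, hsumGA ω]
    rw [heq]
    refine le_trans hchernA (ENNReal.ofReal_le_ofReal (Real.exp_le_exp.2 ?_))
    rw [hcards.1.1, hcards.1.2]
    exact hexp
  have hboundB : P {ω | (∑ j ∈ Finset.range a, XS j ω) ≤ ∑ i ∈ Finset.range B, XR i ω}
      ≤ ENNReal.ofReal (Real.exp (-(μ / (2 * γ)) ^ 2 * t)) := by
    have heq : {ω | (∑ j ∈ Finset.range a, XS j ω) ≤ ∑ i ∈ Finset.range B, XR i ω}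
        = {ω | (∑ c ∈ FB, Sum.elim XR XS c ω) ≤ ∑ c ∈ GB, Sum.elim XR XS c ω} := by
      ext ω; rw [Set.mem_setOf_eq, Set.mem_setOf_eq, hsumFB ω, hsumGB ω]
    rw [heq]
    refine le_trans hchernB (ENNReal.ofReal_le_ofReal (Real.exp_le_exp.2 ?_))
    rw [hcards.2.1, hcards.2.2]
    exact hexp
  -- event inclusion and union bound
  have hsub : {ω | t < ((n : ℝ) - T n ω) / Real.sqrt n}
      ⊆ {ω | (∑ i ∈ Finset.range a, XR i ω) ≤ ∑ j ∈ Finset.range B, XS j ω}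
        ∪ {ω | (∑ j ∈ Finset.range a, XS j ω) ≤ ∑ i ∈ Finset.range B, XR i ω} := by
    intro ω hω
    rcases (event_incl RG (fun i ω => (hbR i ω).1) (fun i ω => (hbS i ω).1)
      hRG0 hstep hg1 hg0 T hT n hn t ht ω hω).2 with h | h
    · exact Or.inl h
    · exact Or.inr h
  calc P {ω | t < ((n : ℝ) - T n ω) / Real.sqrt n}
      ≤ P ({ω | (∑ i ∈ Finset.range a, XR i ω) ≤ ∑ j ∈ Finset.range B, XS j ω}
        ∪ {ω | (∑ j ∈ Finset.range a, XS j ω) ≤ ∑ i ∈ Finset.range B, XR i ω}) :=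
        measure_mono hsub
    _ ≤ P {ω | (∑ i ∈ Finset.range a, XR i ω) ≤ ∑ j ∈ Finset.range B, XS j ω}
        + P {ω | (∑ j ∈ Finset.range a, XS j ω) ≤ ∑ i ∈ Finset.range B, XR i ω} :=
        measure_union_le _ _
    _ ≤ ENNReal.ofReal (Real.exp (-(μ / (2 * γ)) ^ 2 * t))
        + ENNReal.ofReal (Real.exp (-(μ / (2 * γ)) ^ 2 * t)) := add_le_add hboundA hboundB
    _ = ENNReal.ofReal (2 * Real.exp (-(μ / (2 * γ)) ^ 2 * t)) := by
        rw [← ENNReal.ofReal_add (Real.exp_nonneg _) (Real.exp_nonneg _)]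
        congr 1
        ring

private lemma geom_tail {r : ℝ} (hr0 : 0 ≤ r) (hr1 : r < 1) (L : ℕ) :
    (∑ j ∈ Finset.range L, r ^ j) ≤ 1 / (1 - r) := by
  have hne : r ≠ 1 := ne_of_lt hr1
  have h1 : 0 ≤ r ^ L := pow_nonneg hr0 L
  have h2 : r ^ L ≤ 1 := pow_le_one₀ hr0 hr1.le
  rw [geom_sum_eq hne, show r ^ L - 1 = -(1 - r ^ L) by ring,
    show r - 1 = -(1 - r) by ring, neg_div_neg_eq,
    div_le_div_iff₀ (by linarith) (by linarith)]
  nlinarith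

private lemma pow4_le_exp {x : ℝ} (hx : 0 ≤ x) : x ^ 4 ≤ 24 * Real.exp x := by
  have h := Real.sum_le_exp_of_nonneg hx 5
  have h2 : x ^ 4 / (Nat.factorial 4 : ℝ) ≤ ∑ i ∈ Finset.range 5, x ^ i / (Nat.factorial i) := by
    apply Finset.single_le_sum (f := fun i => x ^ i / (Nat.factorial i : ℝ))
    · intro i _; positivity
    · simp
  have h3 : (Nat.factorial 4 : ℝ) = 24 := by norm_num [Nat.factorial]
  rw [h3] at h2
  nlinarith [Real.exp_nonneg x]

private lemma moment_bound {Ω : Type} [MeasurableSpace Ω] (P : Measure Ω)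
    [IsProbabilityMeasure P] (Z : Ω → ℝ) (c K : ℝ) (hc : 0 < c)
    (hZm : Measurable Z) (hZ0 : ∀ ω, 0 ≤ Z ω) (hZbd : ∀ ω, Z ω ≤ K)
    (htail : ∀ j : ℕ, 1 ≤ j → P {ω | (j : ℝ) < Z ω}
      ≤ ENNReal.ofReal (2 * Real.exp (-c * j))) :
    ∫ ω, (Z ω) ^ 4 ∂P ≤ 1 + 48 * (2 / c) ^ 4 * (1 / (1 - Real.exp (-c / 2))) := by
  set L := ⌈K⌉₊ with hL
  set c4 : ℝ := 48 * (2 / c) ^ 4 with hc4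
  have hc40 : 0 < c4 := by rw [hc4]; positivity
  set r : ℝ := Real.exp (-c / 2) with hr
  have hr0 : 0 < r := Real.exp_pos _
  have hr1 : r < 1 := Real.exp_lt_one_iff.2 (by linarith)
  -- pointwise layer-cake bound
  have hpt : ∀ ω, (Z ω) ^ 4 ≤ 1 + ∑ j ∈ Finset.range L,
      Set.indicator {ω' | ((j : ℝ) + 1) < Z ω'} (fun _ => ((j : ℝ) + 2) ^ 4) ω := by
    intro ω
    have hterm0 : ∀ j ∈ Finset.range L,
        (0:ℝ) ≤ Set.indicator {ω' | ((j : ℝ) + 1) < Z ω'} (fun _ => ((j : ℝ) + 2) ^ 4) ω := by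
      intro j _
      apply Set.indicator_nonneg
      intro _ _
      positivity
    rcases le_or_gt (Z ω) 1 with hz | hz
    · have : (Z ω) ^ 4 ≤ 1 := pow_le_one₀ (hZ0 ω) hz
      calc (Z ω) ^ 4 ≤ 1 := this
        _ ≤ _ := le_add_of_nonneg_right (Finset.sum_nonneg hterm0)
    · set l := ⌈Z ω⌉₊ with hl
      have hl2 : 2 ≤ l := by
        rw [hl]
        have h1 : (1 : ℕ) < ⌈Z ω⌉₊ := Nat.lt_ceil.2 (by exact_mod_cast hz)
        omega
      have hlL : l ≤ L := Nat.ceil_le_ceil (hZbd ω)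
      set j := l - 2 with hj
      have hjr : j ∈ Finset.range L := Finset.mem_range.2 (by omega)
      have hjin : ω ∈ {ω' | ((j : ℝ) + 1) < Z ω'} := by
        have h1 : ((l : ℝ)) < Z ω + 1 := Nat.ceil_lt_add_one (hZ0 ω)
        have h2 : ((j : ℝ)) = (l : ℝ) - 2 := by
          have : (j : ℕ) + 2 = l := by omega
          have := congrArg (fun x : ℕ => (x : ℝ)) this
          push_cast at this
          linarith
        simp only [Set.mem_setOf_eq]
        linarith
      have hZl : (Z ω) ^ 4 ≤ ((j : ℝ) + 2) ^ 4 := by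
        have h1 : Z ω ≤ (l : ℝ) := Nat.le_ceil _
        have h2 : ((j : ℝ) + 2) = (l : ℝ) := by
          have : (j : ℕ) + 2 = l := by omega
          exact_mod_cast congrArg (fun x : ℕ => (x : ℝ)) this
        rw [h2]
        exact pow_le_pow_left₀ (hZ0 ω) h1 4
      calc (Z ω) ^ 4 ≤ ((j : ℝ) + 2) ^ 4 := hZl
        _ = Set.indicator {ω' | ((j : ℝ) + 1) < Z ω'} (fun _ => ((j : ℝ) + 2) ^ 4) ω := by
            rw [Set.indicator_of_mem hjin]
        _ ≤ _ := by
            refine le_add_of_nonneg_of_le zero_le_one ?_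
            exact Finset.single_le_sum hterm0 hjr
  -- integrate
  have hmeasset : ∀ j : ℕ, MeasurableSet {ω' | ((j : ℝ) + 1) < Z ω'} :=
    fun j => measurableSet_lt measurable_const hZm
  have hintind : ∀ j : ℕ, Integrable
      (Set.indicator {ω' | ((j : ℝ) + 1) < Z ω'} (fun _ => ((j : ℝ) + 2) ^ 4)) P :=
    fun j => (integrable_const _).indicator (hmeasset j)
  have hZ4int : Integrable (fun ω => (Z ω) ^ 4) P := by
    apply integrable_of_bdd (hZm.pow_const 4) (C := max 1 K ^ 4)
    intro ω
    rw [abs_of_nonneg (by positivity)]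
    exact pow_le_pow_left₀ (hZ0 ω) (le_trans (hZbd ω) (le_max_right 1 K)) 4
  have hint : ∫ ω, (Z ω) ^ 4 ∂P ≤ ∫ ω, (1 + ∑ j ∈ Finset.range L,
      Set.indicator {ω' | ((j : ℝ) + 1) < Z ω'} (fun _ => ((j : ℝ) + 2) ^ 4) ω) ∂P := by
    apply integral_mono hZ4int _ hpt
    exact (integrable_const 1).add (integrable_finset_sum _ (fun j _ => hintind j))
  have hval : ∫ ω, (1 + ∑ j ∈ Finset.range L,
      Set.indicator {ω' | ((j : ℝ) + 1) < Z ω'} (fun _ => ((j : ℝ) + 2) ^ 4) ω) ∂P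
      = 1 + ∑ j ∈ Finset.range L,
        (P {ω' | ((j : ℝ) + 1) < Z ω'}).toReal * ((j : ℝ) + 2) ^ 4 := by
    rw [integral_add (integrable_const 1) (integrable_finset_sum _ (fun j _ => hintind j)),
      integral_const, integral_finset_sum _ (fun j _ => hintind j)]
    simp only [probReal_univ, smul_eq_mul, one_mul]
    congr 1
    apply Finset.sum_congr rfl
    intro j _
    rw [integral_indicator_const _ (hmeasset j)]
    simp [smul_eq_mul, Measure.real]
  -- bound each summand
  have hsummand : ∀ j ∈ Finset.range L,
      (P {ω' | ((j : ℝ) + 1) < Z ω'}).toReal * ((j : ℝ) + 2) ^ 4 ≤ c4 * r ^ j := by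
    intro j _
    have htail' : (P {ω' | ((j : ℝ) + 1) < Z ω'}).toReal ≤ 2 * Real.exp (-c * (j + 1)) := by
      have h1 := htail (j + 1) (by omega)
      have h2 : {ω' | (((j : ℕ) + 1 : ℕ) : ℝ) < Z ω'} = {ω' | ((j : ℝ) + 1) < Z ω'} := by
        ext ω'; push_cast; rfl
      rw [h2] at h1
      have h3 : (((j : ℕ) + 1 : ℕ) : ℝ) = (j : ℝ) + 1 := by push_cast; ring
      rw [h3] at h1
      exact ENNReal.toReal_le_of_le_ofReal (by positivity) h1
    have hjexp : ((j : ℝ) + 2) ^ 4 ≤ 24 * (2 / c) ^ 4 * Real.exp (c * ((j : ℝ) + 2) / 2) := by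
      have hx : (0:ℝ) ≤ c * ((j : ℝ) + 2) / 2 := by positivity
      have := pow4_le_exp hx
      have hc4ne : (c / 2) ^ 4 > 0 := by positivity
      -- (c/2 * (j+2))^4 ≤ 24 exp → (j+2)^4 ≤ 24 (2/c)^4 exp
      have hexpand : (c * ((j : ℝ) + 2) / 2) ^ 4 = (c / 2) ^ 4 * ((j : ℝ) + 2) ^ 4 := by ring
      rw [hexpand] at this
      have hcc : (c / 2) ^ 4 * (2 / c) ^ 4 = 1 := by
        rw [← mul_pow]
        rw [show c / 2 * (2 / c) = 1 by field_simp]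
        norm_num
      calc ((j : ℝ) + 2) ^ 4
          = ((c / 2) ^ 4 * ((j : ℝ) + 2) ^ 4) * (2 / c) ^ 4 := by
            rw [mul_comm ((c / 2) ^ 4) (((j:ℝ) + 2) ^ 4), mul_assoc, hcc, mul_one]
        _ ≤ (24 * Real.exp (c * ((j : ℝ) + 2) / 2)) * (2 / c) ^ 4 :=
            mul_le_mul_of_nonneg_right this (by positivity)
        _ = 24 * (2 / c) ^ 4 * Real.exp (c * ((j : ℝ) + 2) / 2) := by ring
    have hprod : 2 * Real.exp (-c * ((j:ℝ) + 1)) * (24 * (2 / c) ^ 4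
        * Real.exp (c * ((j : ℝ) + 2) / 2)) = c4 * r ^ j := by
      rw [hc4, hr, ← Real.exp_nat_mul]
      calc 2 * Real.exp (-c * ((j:ℝ) + 1)) * (24 * (2 / c) ^ 4
          * Real.exp (c * ((j : ℝ) + 2) / 2))
          = 48 * (2 / c) ^ 4 * (Real.exp (-c * ((j:ℝ) + 1))
            * Real.exp (c * ((j : ℝ) + 2) / 2)) := by ring
        _ = 48 * (2 / c) ^ 4 * Real.exp ((j : ℝ) * (-c / 2)) := by
            rw [← Real.exp_add]; congr 1; ring
    calc (P {ω' | ((j : ℝ) + 1) < Z ω'}).toReal * ((j : ℝ) + 2) ^ 4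
        ≤ (2 * Real.exp (-c * ((j:ℝ) + 1))) * (24 * (2 / c) ^ 4
            * Real.exp (c * ((j : ℝ) + 2) / 2)) := by
          apply mul_le_mul htail' hjexp (by positivity) (by positivity)
      _ = c4 * r ^ j := hprod
  have hsum : (∑ j ∈ Finset.range L,
      (P {ω' | ((j : ℝ) + 1) < Z ω'}).toReal * ((j : ℝ) + 2) ^ 4)
      ≤ c4 * (1 / (1 - r)) := by
    calc (∑ j ∈ Finset.range L, (P {ω' | ((j : ℝ) + 1) < Z ω'}).toReal * ((j : ℝ) + 2) ^ 4)
        ≤ ∑ j ∈ Finset.range L, c4 * r ^ j := Finset.sum_le_sum hsummand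
      _ = c4 * ∑ j ∈ Finset.range L, r ^ j := by rw [Finset.mul_sum]
      _ ≤ c4 * (1 / (1 - r)) :=
          mul_le_mul_of_nonneg_left (geom_tail hr0.le hr1 L) hc40.le
  calc ∫ ω, (Z ω) ^ 4 ∂P ≤ _ := hint
    _ = _ := hval
    _ ≤ 1 + c4 * (1 / (1 - r)) := by linarith
    _ = _ := by rw [hc4, hr]

section Assembly
variable {Ω : Type} [MeasurableSpace Ω] (P : Measure Ω) [IsProbabilityMeasure P]

/-- the uniform integrability part, abstracted -/
private lemma ui_part (T : ℕ → Ω → ℕ) (hTm : ∀ n, Measurable (T n))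
    (hTle : ∀ n ω, T n ω ≤ n) (c : ℝ) (hc : 0 < c)
    (htail : ∀ t : ℝ, 1 ≤ t → ∀ n : ℕ, 1 ≤ n →
      P {ω | t < ((n : ℝ) - T n ω) / Real.sqrt n}
        ≤ ENNReal.ofReal (2 * Real.exp (-c * t))) :
    UniformIntegrable (fun (n : ℕ) (ω : Ω) => (((n : ℝ) - T n ω) / Real.sqrt n) ^ 2) 1 P := by
  set Z : ℕ → Ω → ℝ := fun n ω => ((n : ℝ) - T n ω) / Real.sqrt n with hZ
  have hZm : ∀ n, Measurable (Z n) := by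
    intro n
    apply Measurable.div_const
    exact measurable_const.sub (measurable_from_top.comp (hTm n))
  have hZ0 : ∀ n ω, 0 ≤ Z n ω := by
    intro n ω
    apply div_nonneg _ (Real.sqrt_nonneg _)
    have := hTle n ω
    have : (T n ω : ℝ) ≤ n := by exact_mod_cast this
    linarith
  have hZbd : ∀ n ω, Z n ω ≤ Real.sqrt n := by
    intro n ω
    rcases Nat.eq_zero_or_pos n with h0 | hpos
    · subst h0
      simp only [hZ, Nat.cast_zero, Real.sqrt_zero, div_zero]
      exact le_refl 0
    · have hs : (0:ℝ) < Real.sqrt n := Real.sqrt_pos.2 (by exact_mod_cast hpos)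
      rw [hZ, div_le_iff₀ hs]
      have h1 : (T n ω : ℝ) ≥ 0 := by positivity
      have h2 : Real.sqrt n * Real.sqrt n = (n:ℝ) := Real.mul_self_sqrt (by positivity)
      linarith
  set M : ℝ := 1 + 48 * (2 / c) ^ 4 * (1 / (1 - Real.exp (-c / 2))) with hM
  have hrlt : Real.exp (-c / 2) < 1 := Real.exp_lt_one_iff.2 (by linarith)
  have hM1 : 1 ≤ M := by
    rw [hM]
    have : 0 < 1 - Real.exp (-c / 2) := by linarith
    nlinarith [pow_pos (div_pos two_pos hc) 4, one_div_pos.2 this,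
      mul_pos (mul_pos (by norm_num : (0:ℝ) < 48) (pow_pos (div_pos two_pos hc) 4))
        (one_div_pos.2 this)]
  have hmom : ∀ n : ℕ, ∫ ω, (Z n ω) ^ 4 ∂P ≤ M := by
    intro n
    rcases Nat.eq_zero_or_pos n with h0 | hpos
    · subst h0
      have : ∀ ω, Z 0 ω = 0 := by
        intro ω; simp [hZ]
      rw [show (fun ω => Z 0 ω ^ 4) = fun _ => (0:ℝ) from funext fun ω => by rw [this ω]; ring]
      simp only [integral_const, smul_eq_mul, mul_zero]
      linarith
    · refine le_trans (moment_bound P (Z n) c (Real.sqrt n) hc (hZm n) (hZ0 n) (hZbd n) ?_)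
        (le_of_eq hM.symm)
      intro j hj
      exact htail j (by exact_mod_cast hj) n hpos
  have hfm : ∀ n, Measurable (fun ω => (Z n ω) ^ 2) := fun n => (hZm n).pow_const 2
  apply uniformIntegrable_of (μ := P) le_rfl ENNReal.one_ne_top
    (fun n => (hfm n).aestronglyMeasurable)
  intro ε hε
  refine ⟨Real.toNNReal (max 1 (M / ε)), fun n => ?_⟩
  set C : ℝ≥0 := Real.toNNReal (max 1 (M / ε)) with hC
  have hCR : (C : ℝ) = max 1 (M / ε) := Real.coe_toNNReal _ (le_trans zero_le_one (le_max_left _ _))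
  have hC1 : (1:ℝ) ≤ (C:ℝ) := by rw [hCR]; exact le_max_left _ _
  have hC0 : (0:ℝ) < (C:ℝ) := lt_of_lt_of_le one_pos hC1
  have hCM : M / ε ≤ (C:ℝ) := by rw [hCR]; exact le_max_right _ _
  set g : Ω → ℝ := fun ω => (Z n ω) ^ 2 * (Z n ω) ^ 2 / (C : ℝ) with hg
  have hgnonneg : ∀ ω, 0 ≤ g ω := by
    intro ω; rw [hg]; positivity
  have hmono : ∀ ω, ‖({x | C ≤ ‖(Z n x) ^ 2‖₊}.indicator (fun ω => (Z n ω) ^ 2)) ω‖ ≤ ‖g ω‖ := by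
    intro ω
    rw [Real.norm_eq_abs, Real.norm_eq_abs, abs_of_nonneg (hgnonneg ω)]
    by_cases hmem : ω ∈ {x | C ≤ ‖(Z n x) ^ 2‖₊}
    · rw [Set.indicator_of_mem hmem]
      have hx : (C : ℝ) ≤ (Z n ω) ^ 2 := by
        have := hmem
        simp only [Set.mem_setOf_eq] at this
        have h2 : (C : ℝ) ≤ (‖(Z n ω) ^ 2‖₊ : ℝ) := by exact_mod_cast this
        rwa [coe_nnnorm, Real.norm_eq_abs, abs_of_nonneg (sq_nonneg _)] at h2
      rw [abs_of_nonneg (sq_nonneg _), hg, le_div_iff₀ hC0]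
      exact mul_le_mul_of_nonneg_left hx (sq_nonneg _)
    · rw [Set.indicator_of_notMem hmem]
      simpa using hgnonneg ω
  have hgint : Integrable g P := by
    apply Integrable.div_const
    apply integrable_of_bdd (P := P) ((hfm n).mul (hfm n)) (C := (Real.sqrt n) ^ 4)
    intro ω
    rw [abs_of_nonneg (by simp only [Pi.mul_apply]; positivity)]
    calc (Z n ω) ^ 2 * (Z n ω) ^ 2 ≤ (Real.sqrt n) ^ 2 * (Real.sqrt n) ^ 2 := by
          have h3 : (Z n ω) ^ 2 ≤ (Real.sqrt n) ^ 2 :=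
            pow_le_pow_left₀ (hZ0 n ω) (hZbd n ω) 2
          exact mul_le_mul h3 h3 (sq_nonneg _) (by positivity)
      _ = (Real.sqrt n) ^ 4 := by ring
  have hgval : ∫ ω, g ω ∂P ≤ ε := by
    have h1 : ∫ ω, g ω ∂P = (∫ ω, (Z n ω) ^ 4 ∂P) / (C : ℝ) := by
      rw [hg, integral_div]
      congr 1
      apply integral_congr_ae
      filter_upwards with ω
      ring
    rw [h1]
    calc (∫ ω, (Z n ω) ^ 4 ∂P) / (C : ℝ) ≤ M / (C : ℝ) := by
          exact div_le_div_of_nonneg_right (hmom n) hC0.le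
      _ ≤ ε := by
          rw [div_le_iff₀ hC0]
          rw [div_le_iff₀ hε] at hCM
          linarith
  calc eLpNorm ({x | C ≤ ‖(Z n x) ^ 2‖₊}.indicator (fun ω => (Z n ω) ^ 2)) 1 P
      ≤ eLpNorm g 1 P := eLpNorm_mono hmono
    _ = ∫⁻ ω, ENNReal.ofReal (g ω) ∂P := by
        rw [eLpNorm_one_eq_lintegral_enorm]
        congr 1
        funext ω
        rw [← ofReal_norm_eq_enorm, Real.norm_eq_abs, abs_of_nonneg (hgnonneg ω)]
    _ = ENNReal.ofReal (∫ ω, g ω ∂P) :=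
        (ofReal_integral_eq_lintegral_ofReal hgint (ae_of_all _ hgnonneg)).symm
    _ ≤ ENNReal.ofReal ε := ENNReal.ofReal_le_ofReal hgval

end Assembly

/-- The sequence `((n - T_n)/√n)²` is uniformly integrable; moreover `(n - T_n)/√n` has
exponential tails: for all large `n` and `t ≥ 1`,
`Pr((n - T_n)/√n > t) ≤ 2 exp(-(μ/(2γ))² t)`. -/
theorem greedy_stopping_time_uniform_integrability
    {Ω : Type} [MeasurableSpace Ω] (P : Measure Ω) [IsProbabilityMeasure P]
    (XR XS : ℕ → Ω → ℝ) (γ μ vR vS : ℝ)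
    (hγ : 0 < γ) (hμ : 0 < μ) (hv : 0 < vR + vS)
    (hmR : ∀ i, Measurable (XR i)) (hmS : ∀ i, Measurable (XS i))
    (hbR : ∀ i ω, XR i ω ∈ Set.Icc (0 : ℝ) γ) (hbS : ∀ i ω, XS i ω ∈ Set.Icc (0 : ℝ) γ)
    (hidR : ∀ i, P.map (XR i) = P.map (XR 0)) (hidS : ∀ i, P.map (XS i) = P.map (XS 0))
    (hindep : ProbabilityTheory.iIndepFun (Sum.elim XR XS) P)
    (hmeanR : ∫ ω, XR 0 ω ∂P = μ) (hmeanS : ∫ ω, XS 0 ω ∂P = μ)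
    (hvR : ProbabilityTheory.variance (XR 0) P = vR)
    (hvS : ProbabilityTheory.variance (XS 0) P = vS)
    (RG : ℕ → Ω → ℕ) (hRGmeas : ∀ n, Measurable (RG n)) (hRG0 : ∀ ω, RG 0 ω = 0)
    (hstep : ∀ n ω, RG (n + 1) ω = RG n ω ∨ RG (n + 1) ω = RG n ω + 1)
    (hg1 : ∀ n ω, (∑ i ∈ Finset.range (RG n ω), XR i ω)
        < ∑ j ∈ Finset.range (n - RG n ω), XS j ω → RG (n + 1) ω = RG n ω + 1)
    (hg0 : ∀ n ω, (∑ j ∈ Finset.range (n - RG n ω), XS j ω)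
        < ∑ i ∈ Finset.range (RG n ω), XR i ω → RG (n + 1) ω = RG n ω)
    (hgeq : ∀ n ω, (∑ j ∈ Finset.range (n - RG n ω), XS j ω)
        = ∑ i ∈ Finset.range (RG n ω), XR i ω → RG (n + 1) ω = RG n ω + 1)
    (T : ℕ → Ω → ℕ)
    (hT : ∀ n ω, T n ω = min n (sInf {k : ℕ | 1 ≤ k ∧
        ((k + 1) - RG (k + 1) ω = (n + 1) / 2 + 1 ∨ RG (k + 1) ω = (n + 1) / 2 + 1)})) :
    UniformIntegrable (fun (n : ℕ) (ω : Ω) => (((n : ℝ) - T n ω) / Real.sqrt n) ^ 2) 1 P ∧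
    ∃ N : ℕ, ∀ t : ℝ, 1 ≤ t → ∀ n : ℕ, N ≤ n →
      P {ω | t < ((n : ℝ) - T n ω) / Real.sqrt n}
        ≤ ENNReal.ofReal (2 * Real.exp (-(μ / (2 * γ)) ^ 2 * t)) := by
  have hc : (0:ℝ) < (μ / (2 * γ)) ^ 2 := pow_pos (div_pos hμ (by linarith)) 2
  have htail := tail_bound P XR XS γ μ hγ hμ hmR hmS hbR hbS hidR hidS hindep hmeanR hmeanS
    RG hRG0 hstep hg1 hg0 T hT
  constructor
  · exact ui_part P T (T_meas RG hRGmeas hRG0 hstep T hT)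
      (fun n ω => by rw [hT n ω]; exact min_le_left _ _) ((μ / (2 * γ)) ^ 2) hc
      (fun t ht n hn => htail t ht n hn)
  · exact ⟨1, fun t ht n hn => htail t ht n hn⟩
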